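/- Let w = (w_1,…,w_n) ∈ ℂⁿ with |w_1|² + ⋯ + |w_n|² = 1 (a point of the unit sphere ∂B_n). Let L be a complex Hilbert space, e ∈ L a unit vector, and W_1,…,W_n bounded operators on L with W_i^* W_j = δ_{ij} I, W_i^* e = \overline{w_i} e for all i, and such that the closed linear span of {W^α e : α a word} is L (i.e. W is a minimal isometric dilation of the one-dimensional tuple (w_1,…,w_n)). Then the tuple W acts irreducibly: the only closed subspaces N of L with W_i N ⊆ N and W_i^* N ⊆ N for all i are N = {0} and N = L. -/

import Mathlib

open ContinuousLinearMap

noncomputable def wordProd {n : ℕ} {L : Type*} [NormedAddCommGroup L] [InnerProductSpace ℂ L]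
    (R : Fin n → L →L[ℂ] L) (α : List (Fin n)) : L →L[ℂ] L :=
  (α.map R).prod

/-- the minimal isometric dilation of a point `w` of the unit sphere of
`ℂⁿ` (viewed as a one-dimensional tuple) acts irreducibly: it implements the GNS
representation of the Cuntz state associated to `w`. -/
theorem stmt18 {n : ℕ} (w : Fin n → ℂ) (hw : ∑ i : Fin n, ‖w i‖ ^ 2 = 1)
    {L : Type*} [NormedAddCommGroup L] [InnerProductSpace ℂ L] [CompleteSpace L]
    (e : L) (he : ‖e‖ = 1)
    (W : Fin n → L →L[ℂ] L)
    (hisom : ∀ i j : Fin n, adjoint (W i) ∘L W j = if i = j then 1 else 0)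
    (heig : ∀ i : Fin n, adjoint (W i) e = (starRingEnd ℂ) (w i) • e)
    (hmin : (Submodule.span ℂ {x : L | ∃ α : List (Fin n),
      x = wordProd W α e}).topologicalClosure = ⊤) :
    ∀ N : Submodule ℂ L, IsClosed (N : Set L) →
      (∀ i : Fin n, ∀ x ∈ N, W i x ∈ N ∧ adjoint (W i) x ∈ N) →
      N = ⊥ ∨ N = ⊤ := by
  intro N hN hInv
  haveI : CompleteSpace N := hN.completeSpace_coe
  set S : Set L := {x : L | ∃ α : List (Fin n), x = wordProd W α e} with hS
  have hee : (inner ℂ e e : ℂ) = 1 := by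
    rw [inner_self_eq_norm_sq_to_K, he]; norm_num
  -- eigenvectors of all adjoint (W i) with eigenvalue conj (w i) are multiples of e
  have key : ∀ x : L, (∀ i, adjoint (W i) x = (starRingEnd ℂ) (w i) • x) →
      x = (inner ℂ e x : ℂ) • e := by
    intro x hx
    set y : L := x - (inner ℂ e x : ℂ) • e with hy
    have hey : (inner ℂ e y : ℂ) = 0 := by
      simp [hy, inner_sub_right, inner_smul_right, hee, he]
    have hyeig : ∀ i, adjoint (W i) y = (starRingEnd ℂ) (w i) • y := by
      intro i
      simp only [hy, map_sub, map_smul, hx i, heig i, smul_sub, smul_smul, mul_comm]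
    have hword : ∀ α : List (Fin n), adjoint (wordProd W α) y
        = (α.map fun i => (starRingEnd ℂ) (w i)).prod • y := by
      intro α
      induction α with
      | nil =>
        simp only [wordProd, List.map_nil, List.prod_nil]
        rw [one_def, ContinuousLinearMap.adjoint_id]
        simp
      | cons i α ih =>
        have h1 : wordProd W (i :: α) = W i ∘L wordProd W α := by
          simp [wordProd, List.map_cons, List.prod_cons, mul_def]
        rw [h1, adjoint_comp]
        simp [comp_apply, hyeig i, map_smul, ih, smul_smul, mul_comm]
    have hmem : y ∈ (Submodule.span ℂ S)ᗮ := by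
      rw [Submodule.mem_orthogonal]
      intro u hu
      induction hu using Submodule.span_induction with
      | mem u hu =>
        obtain ⟨α, rfl⟩ := hu
        have : (inner ℂ (wordProd W α e) y : ℂ) = 0 := by
          rw [← adjoint_inner_right, hword, inner_smul_right, hey, mul_zero]
        rw [this]
      | zero => simp
      | add u v _ _ hu hv => rw [inner_add_left, hu, hv, add_zero]
      | smul c u _ hu => rw [inner_smul_left, hu, mul_zero]
    have hbot : (Submodule.span ℂ S)ᗮ = ⊥ :=
      Submodule.topologicalClosure_eq_top_iff.mp hmin
    have hy0 : y = 0 := by rw [hbot] at hmem; simpa using hmem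
    have := sub_eq_zero.mp hy0
    linear_combination (norm := module) this
  -- decompose e
  obtain ⟨p, hp, q, hq, hpq⟩ := N.exists_add_mem_mem_orthogonal e
  -- p is an eigenvector
  have hpeig : ∀ i, adjoint (W i) p = (starRingEnd ℂ) (w i) • p := by
    intro i
    have h1 : adjoint (W i) p - (starRingEnd ℂ) (w i) • p ∈ N :=
      N.sub_mem (hInv i p hp).2 (N.smul_mem _ hp)
    have hqinv : adjoint (W i) q ∈ Nᗮ := by
      rw [Submodule.mem_orthogonal]
      intro u hu
      rw [adjoint_inner_right]
      exact hq (W i u) (hInv i u hu).1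
    have h2 : adjoint (W i) p - (starRingEnd ℂ) (w i) • p ∈ Nᗮ := by
      have hexp : adjoint (W i) p - (starRingEnd ℂ) (w i) • p
          = (starRingEnd ℂ) (w i) • q - adjoint (W i) q := by
        have := heig i
        rw [hpq] at this
        rw [map_add, smul_add] at this
        linear_combination (norm := module) this
      rw [hexp]
      exact Nᗮ.sub_mem (Nᗮ.smul_mem _ hq) hqinv
    have h0 : adjoint (W i) p - (starRingEnd ℂ) (w i) • p = 0 := by
      have := (Submodule.orthogonal_disjoint N).le_bot (Submodule.mem_inf.mpr ⟨h1, h2⟩)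
      simpa using this
    linear_combination (norm := module) h0
  have hpc : p = (inner ℂ e p : ℂ) • e := key p hpeig
  set c : ℂ := inner ℂ e p with hc
  have hqe : q = (1 - c) • e := by
    have : q = e - p := by linear_combination (norm := module) hpq.symm
    rw [this, hpc]
    module
  have horth0 : (inner ℂ p q : ℂ) = 0 := hq p hp
  have hcz : c = 0 ∨ c = 1 := by
    rw [hpc, hqe, inner_smul_left, inner_smul_right, hee, mul_one] at horth0
    rcases mul_eq_zero.mp horth0 with h | h
    · left; simpa using congrArg (starRingEnd ℂ) h
    · right; linear_combination -h
  -- span invariance helper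
  have hspanmem : ∀ (M : Submodule ℂ L), e ∈ M → (∀ i, ∀ x ∈ M, W i x ∈ M) →
      Submodule.span ℂ S ≤ M := by
    intro M heM hMinv
    rw [Submodule.span_le]
    rintro u ⟨α, rfl⟩
    induction α with
    | nil => simpa [wordProd] using heM
    | cons i α ih =>
      have h1 : wordProd W (i :: α) = W i ∘L wordProd W α := by
        simp [wordProd, List.map_cons, List.prod_cons, mul_def]
      rw [h1, comp_apply]
      exact hMinv i _ ih
  rcases hcz with h0 | h1
  · -- e ∈ Nᗮ, so N = ⊥
    left
    have heq : e ∈ Nᗮ := by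
      have : p = 0 := by rw [hpc, h0, zero_smul]
      rw [hpq, this, zero_add]; exact hq
    have hNinv : ∀ i, ∀ x ∈ Nᗮ, W i x ∈ Nᗮ := by
      intro i x hx
      rw [Submodule.mem_orthogonal]
      intro u hu
      rw [← adjoint_inner_left]
      exact hx _ (hInv i u hu).2
    have hle : Submodule.span ℂ S ≤ Nᗮ := hspanmem Nᗮ heq hNinv
    have htop : Nᗮ = ⊤ := by
      have := Submodule.topologicalClosure_mono hle
      rw [hmin, N.isClosed_orthogonal.submodule_topologicalClosure_eq] at this
      exact top_le_iff.mp this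
    have : N ≤ ⊥ := by
      calc N ≤ Nᗮᗮ := N.le_orthogonal_orthogonal
      _ = ⊥ := by rw [htop, Submodule.top_orthogonal_eq_bot]
    exact le_bot_iff.mp this
  · -- e ∈ N, so N = ⊤
    right
    have heq : e ∈ N := by
      have : q = 0 := by rw [hqe, h1, sub_self, zero_smul]
      rw [hpq, this, add_zero]; exact hp
    have hle : Submodule.span ℂ S ≤ N := hspanmem N heq (fun i x hx => (hInv i x hx).1)
    have := Submodule.topologicalClosure_mono hle
    rw [hmin, hN.submodule_topologicalClosure_eq] at this
    exact top_le_iff.mp this
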